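/- Let φ̂_k(x) = T_k(x) − T_{k+2}(x) and φ̃_k(x) = T_k(x) − (2(k+2)/(k+3)) T_{k+2}(x) + ((k+1)/(k+3)) T_{k+4}(x). For all j, k ∈ ℕ the first-derivative matrix entries C̃_{kj} = ⟨φ̂_j', φ̃_k⟩_σ satisfy: C̃_{kj} = −π(k+1) if j = k−1; C̃_{k,k+1} = 2π(k+1); C̃_{k,k+3} = −π(k+1); and C̃_{kj} = 0 otherwise. -/

import Mathlib

open Real Polynomial MeasureTheory intervalIntegral Set

/-- The k-th Chebyshev polynomial of the first kind, as a real polynomial. -/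
noncomputable def chebT (n : ℕ) : Polynomial ℝ := Polynomial.Chebyshev.T ℝ (n : ℤ)

/-- The Chebyshev-weighted inner product `⟨f,g⟩_σ = ∫_{-1}^{1} f g (1-x²)^{-1/2} dx`. -/
noncomputable def chebInner (f g : Polynomial ℝ) : ℝ :=
  ∫ x in (-1:ℝ)..1, f.eval x * g.eval x / Real.sqrt (1 - x ^ 2)

/-- Shen's Dirichlet basis function `φ̂_k = T_k − T_{k+2}`. -/
noncomputable def shenD (k : ℕ) : Polynomial ℝ := chebT k - chebT (k + 2)

/-- Shen's biharmonic basis function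
`φ̃_k = T_k − (2(k+2)/(k+3)) T_{k+2} + ((k+1)/(k+3)) T_{k+4}`. -/
noncomputable def shenB (k : ℕ) : Polynomial ℝ :=
  chebT k - Polynomial.C ((2 * ((k : ℝ) + 2)) / ((k : ℝ) + 3)) * chebT (k + 2)
    + Polynomial.C (((k : ℝ) + 1) / ((k : ℝ) + 3)) * chebT (k + 4)

lemma cos_image_Ioo : Real.cos '' Set.Ioo 0 π = Set.Ioo (-1:ℝ) 1 := by
  apply Set.Subset.antisymm
  · rintro x ⟨θ, hθ, rfl⟩
    constructor
    · have := Real.strictAntiOn_cos ⟨le_of_lt hθ.1, le_of_lt hθ.2⟩ (Set.right_mem_Icc.2 Real.pi_pos.le) hθ.2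
      simpa [Real.cos_pi] using this
    · have := Real.strictAntiOn_cos (Set.left_mem_Icc.2 Real.pi_pos.le) ⟨le_of_lt hθ.1, le_of_lt hθ.2⟩ hθ.1
      simpa [Real.cos_zero] using this
  · rintro x ⟨hx1, hx2⟩
    exact ⟨Real.arccos x, ⟨Real.arccos_pos.2 hx2, lt_of_le_of_ne (Real.arccos_le_pi x) (fun h => by rw [Real.arccos_eq_pi] at h; linarith)⟩, Real.cos_arccos hx1.le hx2.le⟩

lemma cheb_cov (p : Polynomial ℝ) :
    (∫ x in (-1:ℝ)..1, p.eval x / Real.sqrt (1 - x ^ 2)) =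
    ∫ θ in (0:ℝ)..π, p.eval (Real.cos θ) := by
  have h := MeasureTheory.integral_image_eq_integral_abs_deriv_smul (s := Set.Ioo 0 π)
    (f := Real.cos) (f' := fun θ => -Real.sin θ) measurableSet_Ioo
    (fun x _ => (Real.hasDerivAt_cos x).hasDerivWithinAt)
    (Real.injOn_cos.mono Set.Ioo_subset_Icc_self)
    (fun x => p.eval x / Real.sqrt (1 - x ^ 2))
  rw [cos_image_Ioo] at h
  rw [intervalIntegral.integral_of_le (by norm_num : (-1:ℝ) ≤ 1),
      intervalIntegral.integral_of_le Real.pi_pos.le,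
      MeasureTheory.integral_Ioc_eq_integral_Ioo, MeasureTheory.integral_Ioc_eq_integral_Ioo, h]
  apply MeasureTheory.setIntegral_congr_fun measurableSet_Ioo
  intro θ hθ
  have hs : 0 < Real.sin θ := Real.sin_pos_of_pos_of_lt_pi hθ.1 hθ.2
  have h1 : Real.sqrt (1 - Real.cos θ ^ 2) = Real.sin θ := by
    rw [show 1 - Real.cos θ ^ 2 = Real.sin θ ^ 2 by rw [Real.sin_sq]]
    exact Real.sqrt_sq hs.le
  simp only [smul_eq_mul, abs_neg, abs_of_pos hs, h1]
  field_simp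

lemma chebInner_eq (f g : Polynomial ℝ) :
    chebInner f g = ∫ θ in (0:ℝ)..π, f.eval (Real.cos θ) * g.eval (Real.cos θ) := by
  have := cheb_cov (f * g)
  simpa [chebInner, Polynomial.eval_mul] using this

lemma shenD_deriv_eval (j : ℕ) (θ : ℝ) :
    (Polynomial.derivative (shenD j)).eval (Real.cos θ) * Real.sin θ =
      (j : ℝ) * Real.sin ((j : ℝ) * θ) - ((j : ℝ) + 2) * Real.sin (((j : ℝ) + 2) * θ) := by
  have h1 := Polynomial.Chebyshev.U_real_cos θ ((j : ℤ) - 1)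
  have h2 := Polynomial.Chebyshev.U_real_cos θ ((j : ℤ) + 1)
  simp only [shenD, chebT, map_sub, Polynomial.eval_sub,
    Polynomial.Chebyshev.T_derivative_eq_U, Polynomial.eval_mul, Polynomial.eval_intCast]
  rw [show ((j + 2 : ℕ) : ℤ) - 1 = (j:ℤ) + 1 from by push_cast; ring]
  push_cast at h1 h2 ⊢
  rw [sub_mul, mul_assoc, mul_assoc, h1, h2]
  ring_nf

lemma shenB_eval (k : ℕ) (θ : ℝ) :
    ((k : ℝ) + 3) * (shenB k).eval (Real.cos θ) =
      2 * Real.sin θ * (((k : ℝ) + 3) * Real.sin (((k : ℝ) + 1) * θ)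
        - ((k : ℝ) + 1) * Real.sin (((k : ℝ) + 3) * θ)) := by
  have hk : ((k : ℝ) + 3) ≠ 0 := by positivity
  have hp := Real.sin_sq_add_cos_sq θ
  have expand : ((k:ℝ)+3) * (shenB k).eval (Real.cos θ) =
      ((k:ℝ)+3) * Real.cos ((k:ℝ)*θ) - 2*((k:ℝ)+2) * Real.cos (((k:ℝ)+2)*θ)
        + ((k:ℝ)+1) * Real.cos (((k:ℝ)+4)*θ) := by
    simp only [shenB, chebT, Polynomial.eval_add, Polynomial.eval_sub, Polynomial.eval_mul,
      Polynomial.eval_C, Polynomial.Chebyshev.T_real_cos]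
    push_cast
    field_simp
  rw [expand,
      show ((k:ℝ)) * θ = ((k:ℝ)+2)*θ - 2*θ by ring,
      show ((k:ℝ)+4) * θ = ((k:ℝ)+2)*θ + 2*θ by ring,
      show ((k:ℝ)+1) * θ = ((k:ℝ)+2)*θ - θ by ring,
      show ((k:ℝ)+3) * θ = ((k:ℝ)+2)*θ + θ by ring,
      Real.cos_sub, Real.cos_add, Real.sin_sub, Real.sin_add,
      Real.cos_two_mul, Real.sin_two_mul]
  linear_combination (4*(k:ℝ)+8) * Real.cos (((k:ℝ)+2)*θ) * hp

lemma integral_cos_int (m : ℤ) :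
    ∫ θ in (0:ℝ)..π, Real.cos ((m : ℝ) * θ) = if m = 0 then π else 0 := by
  by_cases hm : m = 0
  · simp [hm]
  · have hc : (m : ℝ) ≠ 0 := Int.cast_ne_zero.2 hm
    rw [intervalIntegral.integral_comp_mul_left Real.cos hc]
    simp [integral_cos, Real.sin_int_mul_pi, hm]

lemma sin_mul_sin_integral (m n : ℕ) :
    (∫ θ in (0:ℝ)..π, Real.sin ((m : ℝ) * θ) * Real.sin ((n : ℝ) * θ)) =
      if m = n then (if m = 0 then 0 else π / 2) else 0 := by
  have h : ∀ θ : ℝ, Real.sin ((m:ℝ)*θ) * Real.sin ((n:ℝ)*θ) =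
      (Real.cos ((((m:ℤ) - n : ℤ) : ℝ) * θ) - Real.cos ((((m:ℤ) + n : ℤ) : ℝ) * θ)) / 2 := by
    intro θ
    push_cast
    rw [show ((m:ℝ) - n) * θ = (m:ℝ)*θ - (n:ℝ)*θ by ring,
        show ((m:ℝ) + n) * θ = (m:ℝ)*θ + (n:ℝ)*θ by ring,
        Real.cos_sub, Real.cos_add]
    ring
  simp_rw [h]
  rw [intervalIntegral.integral_div, intervalIntegral.integral_sub
      (Continuous.intervalIntegrable (by continuity) _ _)
      (Continuous.intervalIntegrable (by continuity) _ _),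
    integral_cos_int, integral_cos_int]
  rcases eq_or_ne m n with rfl | hmn
  · rcases eq_or_ne m 0 with rfl | hm0
    · norm_num
    · have h1 : (m:ℤ) - m = 0 := by ring
      have h2 : (m:ℤ) + m ≠ 0 := by
        have : 0 < m := Nat.pos_of_ne_zero hm0
        omega
      simp [h1, h2, hm0]
  · have h1 : (m:ℤ) - n ≠ 0 := by
      simp only [sub_ne_zero]; exact_mod_cast hmn
    by_cases h2 : (m:ℤ) + n = 0
    · have : m = 0 ∧ n = 0 := by omega
      exact absurd (this.1.trans this.2.symm) hmn
    · simp [h1, h2, hmn]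

lemma chebInner_mul (j k : ℕ) :
    ((k:ℝ)+3) * chebInner (Polynomial.derivative (shenD j)) (shenB k) =
      2*(j:ℝ)*((k:ℝ)+3) * (∫ θ in (0:ℝ)..π, Real.sin ((j:ℝ)*θ) * Real.sin (((k:ℝ)+1)*θ))
      - 2*(j:ℝ)*((k:ℝ)+1) * (∫ θ in (0:ℝ)..π, Real.sin ((j:ℝ)*θ) * Real.sin (((k:ℝ)+3)*θ))
      - 2*((j:ℝ)+2)*((k:ℝ)+3) * (∫ θ in (0:ℝ)..π, Real.sin (((j:ℝ)+2)*θ) * Real.sin (((k:ℝ)+1)*θ))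
      + 2*((j:ℝ)+2)*((k:ℝ)+1) * (∫ θ in (0:ℝ)..π, Real.sin (((j:ℝ)+2)*θ) * Real.sin (((k:ℝ)+3)*θ)) := by
  have key : ∀ θ : ℝ, ((k:ℝ)+3) * ((Polynomial.derivative (shenD j)).eval (Real.cos θ) *
      (shenB k).eval (Real.cos θ)) =
      2*(j:ℝ)*((k:ℝ)+3) * (Real.sin ((j:ℝ)*θ) * Real.sin (((k:ℝ)+1)*θ))
      - 2*(j:ℝ)*((k:ℝ)+1) * (Real.sin ((j:ℝ)*θ) * Real.sin (((k:ℝ)+3)*θ))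
      - 2*((j:ℝ)+2)*((k:ℝ)+3) * (Real.sin (((j:ℝ)+2)*θ) * Real.sin (((k:ℝ)+1)*θ))
      + 2*((j:ℝ)+2)*((k:ℝ)+1) * (Real.sin (((j:ℝ)+2)*θ) * Real.sin (((k:ℝ)+3)*θ)) := by
    intro θ
    have hE1 := shenD_deriv_eval j θ
    have hE2 := shenB_eval k θ
    linear_combination (Polynomial.derivative (shenD j)).eval (Real.cos θ) * hE2
      + 2 * (((k:ℝ)+3) * Real.sin (((k:ℝ)+1)*θ) - ((k:ℝ)+1) * Real.sin (((k:ℝ)+3)*θ)) * hE1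
  rw [chebInner_eq, ← intervalIntegral.integral_const_mul]
  rw [intervalIntegral.integral_congr (g := fun θ =>
      2*(j:ℝ)*((k:ℝ)+3) * (Real.sin ((j:ℝ)*θ) * Real.sin (((k:ℝ)+1)*θ))
      - 2*(j:ℝ)*((k:ℝ)+1) * (Real.sin ((j:ℝ)*θ) * Real.sin (((k:ℝ)+3)*θ))
      - 2*((j:ℝ)+2)*((k:ℝ)+3) * (Real.sin (((j:ℝ)+2)*θ) * Real.sin (((k:ℝ)+1)*θ))
      + 2*((j:ℝ)+2)*((k:ℝ)+1) * (Real.sin (((j:ℝ)+2)*θ) * Real.sin (((k:ℝ)+3)*θ)))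
      (fun θ _ => key θ)]
  rw [intervalIntegral.integral_add (by apply Continuous.intervalIntegrable; fun_prop)
        (by apply Continuous.intervalIntegrable; fun_prop),
      intervalIntegral.integral_sub (by apply Continuous.intervalIntegrable; fun_prop)
        (by apply Continuous.intervalIntegrable; fun_prop),
      intervalIntegral.integral_sub (by apply Continuous.intervalIntegrable; fun_prop)
        (by apply Continuous.intervalIntegrable; fun_prop),
      intervalIntegral.integral_const_mul, intervalIntegral.integral_const_mul,
      intervalIntegral.integral_const_mul, intervalIntegral.integral_const_mul]

lemma chebInner_val (j k : ℕ) :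
    ((k:ℝ)+3) * chebInner (Polynomial.derivative (shenD j)) (shenB k) =
      2*(j:ℝ)*((k:ℝ)+3) * (if j = k+1 then (if j = 0 then 0 else π/2) else 0)
      - 2*(j:ℝ)*((k:ℝ)+1) * (if j = k+3 then (if j = 0 then 0 else π/2) else 0)
      - 2*((j:ℝ)+2)*((k:ℝ)+3) * (if j+2 = k+1 then (if j+2 = 0 then 0 else π/2) else 0)
      + 2*((j:ℝ)+2)*((k:ℝ)+1) * (if j+2 = k+3 then (if j+2 = 0 then 0 else π/2) else 0) := by
  rw [chebInner_mul j k]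
  have t1 := sin_mul_sin_integral j (k+1)
  have t2 := sin_mul_sin_integral j (k+3)
  have t3 := sin_mul_sin_integral (j+2) (k+1)
  have t4 := sin_mul_sin_integral (j+2) (k+3)
  push_cast at t1 t2 t3 t4
  rw [t1, t2, t3, t4]
  simp only [show (j+2 = k+1) ↔ (j+1 = k) from by omega,
    show (j+2 = k+3) ↔ (j = k+1) from by omega, Nat.add_eq_zero, OfNat.ofNat_ne_zero,
    and_false, if_false]

/-- The first-derivative matrix `C̃_{kj} = ⟨φ̂_j', φ̃_k⟩_σ`: it is zero except
on the diagonals `j = k−1, k+1, k+3` where `C̃_{k,k−1} = −π(k+1)`,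
`C̃_{k,k+1} = 2π(k+1)` and `C̃_{k,k+3} = −π(k+1)`. -/
theorem shen_first_derivative_matrix_DB :
    -- j = k − 1 (stated with row index k+1): C̃_{k+1,k} = −π((k+1)+1)
    (∀ k : ℕ, chebInner (Polynomial.derivative (shenD k)) (shenB (k + 1)) =
      -Real.pi * (((k : ℝ) + 1) + 1)) ∧
    -- j = k + 1: C̃_{k,k+1} = 2π(k+1)
    (∀ k : ℕ, chebInner (Polynomial.derivative (shenD (k + 1))) (shenB k) =
      2 * Real.pi * ((k : ℝ) + 1)) ∧
    -- j = k + 3: C̃_{k,k+3} = −π(k+1)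
    (∀ k : ℕ, chebInner (Polynomial.derivative (shenD (k + 3))) (shenB k) =
      -Real.pi * ((k : ℝ) + 1)) ∧
    -- otherwise zero
    (∀ j k : ℕ, k ≠ j + 1 → j ≠ k + 1 → j ≠ k + 3 →
      chebInner (Polynomial.derivative (shenD j)) (shenB k) = 0) := by
  refine ⟨fun k => ?_, fun k => ?_, fun k => ?_, fun j k h1 h2 h3 => ?_⟩
  · have h := chebInner_val k (k+1)
    rw [if_neg (by omega), if_neg (by omega), if_pos (by omega), if_neg (by omega),
        if_neg (by omega)] at h
    push_cast at h
    have hk : ((k:ℝ)+1+3) ≠ 0 := by positivity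
    apply mul_left_cancel₀ hk
    rw [h]; ring
  · have h := chebInner_val (k+1) k
    rw [if_pos rfl, if_neg (by omega), if_neg (by omega), if_neg (by omega),
        if_pos (by omega), if_neg (by omega)] at h
    push_cast at h
    have hk : ((k:ℝ)+3) ≠ 0 := by positivity
    apply mul_left_cancel₀ hk
    rw [h]; ring
  · have h := chebInner_val (k+3) k
    rw [if_neg (by omega), if_pos rfl, if_neg (by omega), if_neg (by omega),
        if_neg (by omega)] at h
    push_cast at h
    have hk : ((k:ℝ)+3) ≠ 0 := by positivity
    apply mul_left_cancel₀ hk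
    rw [h]; ring
  · have h := chebInner_val j k
    rw [if_neg h2, if_neg h3, if_neg (by omega), if_neg (by omega)] at h
    have hk : ((k:ℝ)+3) ≠ 0 := by positivity
    apply mul_left_cancel₀ hk
    rw [h]; ring
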